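/- Let ℓ(θ) = Σ_c [ -n_c·θᵀz_c + t_c·exp(θᵀz_c) ] with t_c ≥ 0 and z_c ∈ ℝ^d over a finite index set. Then for any β, b ∈ ℝ^d, setting c_b = max_c exp(|bᵀz_c|), we have c_b^{-1}·bᵀ∇²ℓ(β)b ≤ bᵀ(∇ℓ(β+b) - ∇ℓ(β)) ≤ c_b·bᵀ∇²ℓ(β)b, where bᵀ∇²ℓ(β)b = Σ_c t_c·exp(βᵀz_c)·(bᵀz_c)². -/

import Mathlib

lemma pt_bound (u : ℝ) :
    Real.exp (-|u|) * u ^ 2 ≤ u * (Real.exp u - 1) ∧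
      u * (Real.exp u - 1) ≤ Real.exp |u| * u ^ 2 := by
  have h1 := Real.add_one_le_exp u
  have h2 := Real.add_one_le_exp (-u)
  have h3 := Real.exp_pos u
  have h4 := Real.exp_pos (-u)
  have h5 : Real.exp u * Real.exp (-u) = 1 := by
    rw [← Real.exp_add]; simp
  rcases le_or_gt 0 u with h | h
  · rw [abs_of_nonneg h]
    have h6 : Real.exp (-u) ≤ 1 := by nlinarith
    constructor
    · nlinarith [mul_le_mul_of_nonneg_left h1 h,
        mul_le_mul_of_nonneg_right h6 (sq_nonneg u)]
    · nlinarith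
  · rw [abs_of_neg h, neg_neg]
    have h7 : 0 ≤ 1 - Real.exp u + u * Real.exp u := by
      nlinarith [mul_le_mul_of_nonneg_right h2 h3.le]
    constructor
    · nlinarith [mul_nonneg (neg_nonneg.mpr h.le) h7]
    · nlinarith

theorem grad_diff_two_sided_bound {d : ℕ} {ι : Type*} [Fintype ι] [Nonempty ι]
    (n t : ι → ℝ) (z : ι → Fin d → ℝ) (ht : ∀ c, 0 ≤ t c)
    (ell : (Fin d → ℝ) → ℝ)
    (hell : ell = fun θ =>
      ∑ c, (-(n c) * ∑ i, θ i * z c i + t c * Real.exp (∑ i, θ i * z c i)))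
    (β b : Fin d → ℝ)
    (cb : ℝ)
    (hcb : cb = Finset.univ.sup' Finset.univ_nonempty
      fun c => Real.exp |∑ i, b i * z c i|) :
    cb⁻¹ * (∑ c, t c * Real.exp (∑ i, β i * z c i) * (∑ i, b i * z c i) ^ 2) ≤
      fderiv ℝ ell (β + b) b - fderiv ℝ ell β b ∧
    fderiv ℝ ell (β + b) b - fderiv ℝ ell β b ≤
      cb * (∑ c, t c * Real.exp (∑ i, β i * z c i) * (∑ i, b i * z c i) ^ 2) := by
  classical
  set L : ι → (Fin d → ℝ) →L[ℝ] ℝ := fun c =>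
    ∑ i, (z c i) • (ContinuousLinearMap.proj i : (Fin d → ℝ) →L[ℝ] ℝ) with hLdef
  have hLv : ∀ c (v : Fin d → ℝ), L c v = ∑ i, v i * z c i := by
    intro c v
    simp [hLdef, ContinuousLinearMap.sum_apply, mul_comm]
  have hg : ∀ (c : ι) (θ : Fin d → ℝ),
      HasFDerivAt (fun θ : Fin d → ℝ => ∑ i, θ i * z c i) (L c) θ := by
    intro c θ
    have heq : (fun θ : Fin d → ℝ => ∑ i, θ i * z c i) = fun θ => L c θ := by
      funext θ; rw [hLv]
    rw [heq]
    exact (L c).hasFDerivAt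
  have key : ∀ θ : Fin d → ℝ, HasFDerivAt ell
      (∑ c, (-(n c) + t c * Real.exp (∑ i, θ i * z c i)) • L c) θ := by
    intro θ
    rw [hell]
    apply HasFDerivAt.fun_sum
    intro c _
    have h1 := (hg c θ).const_mul (-(n c))
    have h2 := ((hg c θ).exp).const_mul (t c)
    have h3 := h1.fun_add h2
    convert h3 using 1
    rw [smul_smul]
    rw [add_smul]
  have hf : ∀ θ : Fin d → ℝ, fderiv ℝ ell θ b
      = ∑ c, (-(n c) + t c * Real.exp (∑ i, θ i * z c i)) * (∑ i, b i * z c i) := by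
    intro θ
    rw [(key θ).fderiv]
    rw [ContinuousLinearMap.sum_apply]
    refine Finset.sum_congr rfl fun c _ => ?_
    rw [ContinuousLinearMap.smul_apply, hLv, smul_eq_mul]
  have hD : fderiv ℝ ell (β + b) b - fderiv ℝ ell β b
      = ∑ c, t c * Real.exp (∑ i, β i * z c i) *
          ((Real.exp (∑ i, b i * z c i) - 1) * (∑ i, b i * z c i)) := by
    rw [hf, hf, ← Finset.sum_sub_distrib]
    refine Finset.sum_congr rfl fun c _ => ?_
    have hsplit : (∑ i, (β + b) i * z c i)
        = (∑ i, β i * z c i) + (∑ i, b i * z c i) := by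
      rw [← Finset.sum_add_distrib]
      refine Finset.sum_congr rfl fun i _ => ?_
      simp [add_mul]
    rw [hsplit, Real.exp_add]; ring
  have hcb1 : ∀ c : ι, Real.exp |∑ i, b i * z c i| ≤ cb := by
    intro c; rw [hcb]
    exact Finset.le_sup' (fun c => Real.exp |∑ i, b i * z c i|) (Finset.mem_univ c)
  have hcbpos : 0 < cb :=
    lt_of_lt_of_le (Real.exp_pos _) (hcb1 (Classical.arbitrary ι))
  have hinv : ∀ c : ι, cb⁻¹ ≤ Real.exp (-|∑ i, b i * z c i|) := by
    intro c
    rw [Real.exp_neg]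
    exact inv_anti₀ (Real.exp_pos _) (hcb1 c)
  constructor
  · rw [hD, Finset.mul_sum]
    apply Finset.sum_le_sum
    intro c _
    have hnn : 0 ≤ t c * Real.exp (∑ i, β i * z c i) :=
      mul_nonneg (ht c) (Real.exp_pos _).le
    have hpt := (pt_bound (∑ i, b i * z c i)).1
    have hsq := sq_nonneg (∑ i, b i * z c i)
    nlinarith [mul_le_mul_of_nonneg_right (hinv c) (mul_nonneg hnn hsq),
      mul_le_mul_of_nonneg_left hpt hnn]
  · rw [hD, Finset.mul_sum]
    apply Finset.sum_le_sum
    intro c _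
    have hnn : 0 ≤ t c * Real.exp (∑ i, β i * z c i) :=
      mul_nonneg (ht c) (Real.exp_pos _).le
    have hpt := (pt_bound (∑ i, b i * z c i)).2
    have hsq := sq_nonneg (∑ i, b i * z c i)
    nlinarith [mul_le_mul_of_nonneg_right (hcb1 c) (mul_nonneg hnn hsq),
      mul_le_mul_of_nonneg_left hpt hnn]
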